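/- Let (α₁, β₁), …, (α_t, β_t) be a nonempty list of pairs of positive integers, let w(A,B) = A^{α₁}B^{β₁}⋯A^{α_t}B^{β_t}, and let a = α₁ + ⋯ + α_t. Then there exists a polynomial P ∈ ℤ[x, y, z] such that every monomial xⁱyʲzᵏ occurring in P with nonzero coefficient satisfies i + k ≤ a, and such that for all A, B ∈ SL₂(ℂ): trace(w(A,B)) = P(trace A, trace B, trace(A·B)). -/
import Mathlib

open Matrix MvPolynomial

namespace FrickeAux

abbrev MP := MvPolynomial (Fin 3) ℤ
abbrev M2 := Matrix (Fin 2) (Fin 2) ℂ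

open FrickeAux
/-- Weighted `(x,z)`-degree bound predicate. -/
def D (w n : ℕ) (p : MP) : Prop := ∀ m ∈ p.support, m 0 + m 2 + w ≤ n

lemma D.add {w n p q} (hp : D w n p) (hq : D w n q) : D w n (p + q) := by
  intro m hm
  rcases Finset.mem_union.1 (MvPolynomial.support_add hm) with h | h
  exacts [hp m h, hq m h]

lemma D.neg {w n p} (hp : D w n p) : D w n (-p) := by
  intro m hm; exact hp m (by rwa [MvPolynomial.support_neg] at hm)

lemma D.sub {w n p q} (hp : D w n p) (hq : D w n q) : D w n (p - q) := by
  rw [sub_eq_add_neg]; exact hp.add hq.neg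

lemma D.mul {a w b p q} (hp : D 0 a p) (hq : D w b q) : D w (a + b) (p * q) := by
  intro m hm
  rcases Finset.mem_add.1 (MvPolynomial.support_mul p q hm) with ⟨u, hu, v, hv, rfl⟩
  have h1 := hp u hu
  have h2 := hq v hv
  simp only [Finsupp.add_apply]
  omega

lemma D.relax {w n p} (w' n' : ℕ) (hp : D w n p) (h : n + w' ≤ n' + w) : D w' n' p := by
  intro m hm; have := hp m hm; omega

lemma D_zero (w n) : D w n 0 := by simp [D]

lemma D_one (w n) (h : w ≤ n) : D w n 1 := by
  intro m hm
  rw [show (1 : MP) = monomial 0 1 by rw [monomial_zero', C_1]] at hm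
  have hm' : m = 0 := by simpa using MvPolynomial.support_monomial_subset hm
  simp [hm', h]

lemma D_X : ∀ i : Fin 3, D 0 1 (X i : MP) := by
  intro i m hm
  rw [MvPolynomial.support_X] at hm
  simp only [Finset.mem_singleton] at hm
  subst hm
  fin_cases i <;> simp [Finsupp.single_apply]

lemma D_X1 : D 0 0 (X 1 : MP) := by
  intro m hm
  rw [MvPolynomial.support_X] at hm
  simp only [Finset.mem_singleton] at hm
  subst hm; simp [Finsupp.single_apply]

/-- The Fricke recursion on words (lists of booleans, `true` = A, `false` = B);
returns `(p, q, r, s)` with `word = p•1 + q•A + r•B + s•AB`. -/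
noncomputable def FP : List Bool → MP × MP × MP × MP
  | [] => (1, 0, 0, 0)
  | true :: L =>
      (-(FP L).2.1, (FP L).1 + X 0 * (FP L).2.1, -(FP L).2.2.2,
       (FP L).2.2.1 + X 0 * (FP L).2.2.2)
  | false :: L =>
      (-(FP L).2.2.1 + (X 2 - X 0 * X 1) * (FP L).2.1 - X 0 * (FP L).2.2.2,
       X 1 * (FP L).2.1 + (FP L).2.2.2,
       (FP L).1 + X 0 * (FP L).2.1 + X 1 * (FP L).2.2.1 + X 2 * (FP L).2.2.2,
       -(FP L).2.1)

lemma FP_deg (L : List Bool) :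
    D 0 (L.count true) (FP L).1 ∧ D 1 (L.count true) (FP L).2.1 ∧
    D 0 (L.count true) (FP L).2.2.1 ∧ D 1 (L.count true) (FP L).2.2.2 := by
  induction L with
  | nil => exact ⟨D_one 0 0 le_rfl, D_zero _ _, D_zero _ _, D_zero _ _⟩
  | cons b L ih =>
    obtain ⟨hp, hq, hr, hs⟩ := ih
    set c := L.count true with hc
    cases b with
    | true =>
      have hcount : (true :: L).count true = c + 1 := by simp [hc]
      refine ⟨?_, ?_, ?_, ?_⟩ <;> simp only [FP, hcount]
      · exact (hq.relax 0 (c+1) (by omega)).neg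
      · exact (hp.relax 1 (c+1) (by omega)).add ((D_X 0).mul hq |>.relax 1 (c+1) (by omega))
      · exact (hs.relax 0 (c+1) (by omega)).neg
      · exact (hr.relax 1 (c+1) (by omega)).add ((D_X 0).mul hs |>.relax 1 (c+1) (by omega))
    | false =>
      have hcount : (false :: L).count true = c := by simp [hc]
      have hxz : D 0 1 ((X 2 - X 0 * X 1 : MP)) :=
        (D_X 2).sub (((D_X 0).mul D_X1).relax 0 1 (by omega))
      refine ⟨?_, ?_, ?_, ?_⟩ <;> simp only [FP, hcount]
      · exact (hr.neg.add ((hxz.mul hq).relax 0 c (by omega))).sub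
          (((D_X 0).mul hs).relax 0 c (by omega))
      · exact ((D_X1.mul hq).relax 1 c (by omega)).add hs
      · exact ((hp.add (((D_X 0).mul hq).relax 0 c (by omega))).add
          ((D_X1.mul hr).relax 0 c (by omega))).add (((D_X 2).mul hs).relax 0 c (by omega))
      · exact hq.neg

set_option linter.unreachableTactic false
set_option linter.unusedTactic false

lemma sqCH (U : M2) (h : U.det = 1) : U * U = U.trace • U - 1 := by
  rw [det_fin_two] at h
  rw [← Matrix.ext_iff]
  simp only [Fin.forall_fin_two, Matrix.mul_apply, Fin.sum_univ_two, Matrix.trace_fin_two,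
    Matrix.sub_apply, Matrix.smul_apply, Matrix.one_apply, smul_eq_mul]
  norm_num
  refine ⟨⟨?_, ?_⟩, ?_, ?_⟩ <;> first | ring1 | linear_combination -h | linear_combination h

lemma BA_eq (A B : M2) :
    B * A = -(A * B) + B.trace • A + A.trace • B + ((A*B).trace - A.trace * B.trace) • 1 := by
  rw [← Matrix.ext_iff]
  simp only [Fin.forall_fin_two, Matrix.mul_apply, Fin.sum_univ_two, Matrix.trace_fin_two,
    Matrix.add_apply, Matrix.neg_apply, Matrix.smul_apply, Matrix.one_apply, smul_eq_mul]
  norm_num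
  refine ⟨⟨?_, ?_⟩, ?_, ?_⟩ <;> ring

lemma BAB_eq (A B : M2) (hB : B.det = 1) :
    B * (A * B) = A + (A*B).trace • B - A.trace • 1 := by
  rw [det_fin_two] at hB
  rw [← Matrix.ext_iff]
  simp only [Fin.forall_fin_two, Matrix.mul_apply, Fin.sum_univ_two, Matrix.trace_fin_two,
    Matrix.add_apply, Matrix.sub_apply, Matrix.smul_apply, Matrix.one_apply, smul_eq_mul]
  norm_num
  refine ⟨⟨?_, ?_⟩, ?_, ?_⟩ <;>
    first
      | ring1
      | linear_combination (A 0 0) * hB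
      | linear_combination (-(A 0 0)) * hB
      | linear_combination (A 1 1) * hB
      | linear_combination (-(A 1 1)) * hB
      | linear_combination (A 0 1) * hB
      | linear_combination (-(A 0 1)) * hB
      | linear_combination (A 1 0) * hB
      | linear_combination (-(A 1 0)) * hB

lemma FP_eval (A B : M2) (hA : A.det = 1) (hB : B.det = 1) (L : List Bool) :
    (L.map fun b => if b then A else B).prod =
      (aeval ![A.trace, B.trace, (A*B).trace] (FP L).1) • (1 : M2) +
      (aeval ![A.trace, B.trace, (A*B).trace] (FP L).2.1) • A +
      (aeval ![A.trace, B.trace, (A*B).trace] (FP L).2.2.1) • B +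
      (aeval ![A.trace, B.trace, (A*B).trace] (FP L).2.2.2) • (A*B) := by
  set v : Fin 3 → ℂ := ![A.trace, B.trace, (A*B).trace] with hv
  have hv0 : v 0 = A.trace := rfl
  have hv1 : v 1 = B.trace := rfl
  have hv2 : v 2 = (A*B).trace := rfl
  induction L with
  | nil => simp [FP]
  | cons b L ih =>
    rw [List.map_cons, List.prod_cons, ih]
    cases b with
    | true =>
      simp only [FP, if_true, map_add, map_neg, _root_.map_mul, aeval_X, hv0, hv1, hv2]
      have hAA : A * A = A.trace • A - 1 := sqCH A hA
      have hAAB : A * (A * B) = A.trace • (A * B) - B := by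
        rw [← mul_assoc, hAA, sub_mul, smul_mul_assoc, one_mul]
      rw [mul_add, mul_add, mul_add, mul_smul_comm, mul_smul_comm, mul_smul_comm,
        mul_smul_comm, mul_one, hAA, hAAB]
      module
    | false =>
      simp only [FP, Bool.false_eq_true, if_false, map_add, map_sub, map_neg, _root_.map_mul,
        aeval_X, hv0, hv1, hv2]
      have hBB : B * B = B.trace • B - 1 := sqCH B hB
      have hBA := BA_eq A B
      have hBAB := BAB_eq A B hB
      rw [mul_add, mul_add, mul_add, mul_smul_comm, mul_smul_comm, mul_smul_comm,
        mul_smul_comm, mul_one, hBA, hBB, hBAB]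
      module

lemma coe_list_prod (l : List (Matrix.SpecialLinearGroup (Fin 2) ℂ)) :
    ((l.prod : Matrix.SpecialLinearGroup (Fin 2) ℂ) : M2) =
      (l.map fun g : Matrix.SpecialLinearGroup (Fin 2) ℂ => (g : M2)).prod := by
  induction l with
  | nil => simp
  | cons h t ih => simp [ih]

end FrickeAux

open FrickeAux

/-- **Fricke polynomials; Lemma 3.8 of the paper.** For a monotone
word `w(A,B) = A^{α₁}B^{β₁}⋯A^{α_t}B^{β_t}` with all `αᵢ, βᵢ > 0` and
`a = Σᵢ αᵢ`, there is a polynomial `P ∈ ℤ[x,y,z]` of `(x,z)`-degree at most `a`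
such that `trace (w(A,B)) = P(trace A, trace B, trace AB)` for all
`A, B ∈ SL₂(ℂ)`. -/
theorem fricke_polynomial_xz_degree (t : ℕ) (ht : 0 < t) (α β : Fin t → ℕ)
    (hα : ∀ i, 0 < α i) (hβ : ∀ i, 0 < β i) :
    ∃ P : MvPolynomial (Fin 3) ℤ,
      (∀ mono ∈ P.support, mono 0 + mono 2 ≤ ∑ i, α i) ∧
      ∀ A B : Matrix.SpecialLinearGroup (Fin 2) ℂ,
        Matrix.trace (((List.ofFn fun i => A ^ α i * B ^ β i).prod :
            Matrix.SpecialLinearGroup (Fin 2) ℂ) : Matrix (Fin 2) (Fin 2) ℂ) =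
          MvPolynomial.aeval
            ![Matrix.trace ((A : Matrix (Fin 2) (Fin 2) ℂ)),
              Matrix.trace ((B : Matrix (Fin 2) (Fin 2) ℂ)),
              Matrix.trace (((A * B : Matrix.SpecialLinearGroup (Fin 2) ℂ) :
                Matrix (Fin 2) (Fin 2) ℂ))] P := by
  classical
  set Lw : List Bool :=
    (List.ofFn fun i => List.replicate (α i) true ++ List.replicate (β i) false).flatten with hLw
  have hcount : Lw.count true = ∑ i, α i := by
    simp [hLw, List.count_flatten, List.map_ofFn, Function.comp, List.count_append,
      List.count_replicate, List.sum_ofFn]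
  obtain ⟨hp, hq, hr, hs⟩ := FP_deg Lw
  rw [hcount] at hp hq hr hs
  refine ⟨(FP Lw).1 + (FP Lw).1 + X 0 * (FP Lw).2.1 + X 1 * (FP Lw).2.2.1
      + X 2 * (FP Lw).2.2.2, ?_, ?_⟩
  · have : D 0 (∑ i, α i) ((FP Lw).1 + (FP Lw).1 + X 0 * (FP Lw).2.1 + X 1 * (FP Lw).2.2.1
        + X 2 * (FP Lw).2.2.2) := by
      refine (((hp.add hp).add ?_).add ?_).add ?_
      · exact ((D_X 0).mul hq).relax 0 _ (by omega)
      · exact (D_X1.mul hr).relax 0 _ (by omega)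
      · exact ((D_X 2).mul hs).relax 0 _ (by omega)
    intro m hm
    have := this m hm
    omega
  · intro A B
    have hA : (A : M2).det = 1 := A.2
    have hB : (B : M2).det = 1 := B.2
    have hword : ((List.ofFn fun i => A ^ α i * B ^ β i).prod :
        Matrix.SpecialLinearGroup (Fin 2) ℂ) =
        (Lw.map fun b => if b then (A : M2) else (B : M2)).prod := by
      rw [coe_list_prod, List.map_ofFn]
      have h1 : ((fun g : Matrix.SpecialLinearGroup (Fin 2) ℂ => (g : M2)) ∘
          fun i => A ^ α i * B ^ β i) =
          fun i => (A : M2) ^ α i * (B : M2) ^ β i := by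
        funext i; simp
      rw [h1, hLw]
      simp only [List.map_flatten, List.map_ofFn, List.prod_flatten]
      congr 1
      congr 1
      funext i
      simp [Function.comp, List.map_append, List.map_replicate, List.prod_append,
        List.prod_replicate]
    rw [hword, FP_eval (A : M2) (B : M2) hA hB Lw]
    simp only [Matrix.trace_add, Matrix.trace_smul, Matrix.trace_one, map_add,
      _root_.map_mul, aeval_X, Matrix.SpecialLinearGroup.coe_mul, smul_eq_mul,
      Matrix.cons_val_zero, Matrix.cons_val_one, Matrix.head_cons, Matrix.cons_val_two,
      Matrix.tail_cons, Fintype.card_fin]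
    ring
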